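/- Let n ≥ 1 be an integer, k ≥ 0, and D > 0 with D < π/√k when k > 0. Define tn_k(s) = √k·tan(√k·s) for k > 0 and tn_k ≡ 0 for k = 0. Let Ṽ : (−D/2, D/2) → ℝ be differentiable, λ̄₁ ∈ ℝ, and let φ : (−D/2, D/2) → ℝ be positive and three times differentiable satisfying the eigenvalue equation −φ'' + (n−1)·tn_k·φ' + Ṽφ = λ̄₁φ on (−D/2, D/2). Then Ψ := φ'/φ satisfies, for every s ∈ (−D/2, D/2), Ψ''(s) + 2Ψ'(s)Ψ(s) − tn_k(s)·[(n+1)Ψ'(s) + 2λ̄₁ + 2Ψ(s)² − 2Ṽ(s)] − Ṽ'(s) − (n−1)·(k − tn_k(s)²)·Ψ(s) = 0. -/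

import Mathlib

/-- `tn_k(s) = √k · tan(√k · s)` for `k > 0`, and `tn_k ≡ 0` for `k ≤ 0`. -/
noncomputable def tnk (k s : ℝ) : ℝ :=
  if 0 < k then Real.sqrt k * Real.tan (Real.sqrt k * s) else 0

lemma tnk_hasDerivAt (k : ℝ) (hk : 0 ≤ k) (D : ℝ)
    (hDk : 0 < k → D < Real.pi / Real.sqrt k) (r : ℝ)
    (hr : r ∈ Set.Ioo (-(D / 2)) (D / 2)) :
    HasDerivAt (tnk k) (k + tnk k r ^ 2) r := by
  by_cases hk0 : 0 < k
  · have hfn : tnk k = fun x => Real.sqrt k * Real.tan (Real.sqrt k * x) := by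
      funext x; simp [tnk, hk0]
    have hsk : 0 < Real.sqrt k := Real.sqrt_pos.2 hk0
    have hrabs : |r| < D / 2 := abs_lt.2 ⟨hr.1, hr.2⟩
    have hDlt : Real.sqrt k * D < Real.pi := by
      have := hDk hk0
      rwa [lt_div_iff₀ hsk, mul_comm] at this
    have hlt : |Real.sqrt k * r| < Real.pi / 2 := by
      rw [abs_mul, abs_of_pos hsk]
      nlinarith [abs_nonneg r]
    have hcos : Real.cos (Real.sqrt k * r) ≠ 0 := by
      have := Real.cos_pos_of_mem_Ioo (by constructor <;> [linarith [abs_lt.1 hlt]; linarith [abs_lt.1 hlt]] : Real.sqrt k * r ∈ Set.Ioo (-(Real.pi / 2)) (Real.pi / 2))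
      exact this.ne'
    have hlin : HasDerivAt (fun x : ℝ => Real.sqrt k * x) (Real.sqrt k) r := by
      simpa using (hasDerivAt_id r).const_mul (Real.sqrt k)
    have htan := (Real.hasDerivAt_tan hcos).comp r hlin
    have hfull := htan.const_mul (Real.sqrt k)
    rw [hfn]
    refine hfull.congr_deriv ?_
    symm
    have h1 : (1 + Real.tan (Real.sqrt k * r) ^ 2)⁻¹ = Real.cos (Real.sqrt k * r) ^ 2 :=
      Real.inv_one_add_tan_sq hcos
    have h1' : 1 + Real.tan (Real.sqrt k * r) ^ 2 = 1 / Real.cos (Real.sqrt k * r) ^ 2 := by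
      rw [← h1]; rw [one_div, inv_inv]
    have h2 : Real.sqrt k * Real.sqrt k = k := Real.mul_self_sqrt hk
    rw [mul_comm (1 / Real.cos (Real.sqrt k * r) ^ 2), ← mul_assoc, h2, ← h1']
    simp only [mul_pow, Real.sq_sqrt hk]
    ring
  · have hk0' : k = 0 := le_antisymm (not_lt.1 hk0) hk
    have hfn : tnk k = fun _ : ℝ => (0 : ℝ) := by
      funext x; simp [tnk, hk0]
    rw [hfn, hk0']
    simpa using hasDerivAt_const r (0 : ℝ)

/-- The Riccati-type identity (equation (4.5)) satisfied by `Ψ = (log φ)' = φ'/φ` for a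
positive solution `φ` of the one-dimensional model eigenvalue equation
`−φ'' + (n−1) tn_k φ' + Ṽ φ = λ̄₁ φ` on `(−D/2, D/2)`. -/
theorem riccati_identity_one_dim_model
    (n : ℕ) (hn : 1 ≤ n) (k : ℝ) (hk : 0 ≤ k)
    (D : ℝ) (hD : 0 < D) (hDk : 0 < k → D < Real.pi / Real.sqrt k)
    (Vt : ℝ → ℝ)
    (hVt : ∀ s ∈ Set.Ioo (-(D / 2)) (D / 2), DifferentiableAt ℝ Vt s)
    (lamb₁ : ℝ) (φ : ℝ → ℝ)
    (hφpos : ∀ s ∈ Set.Ioo (-(D / 2)) (D / 2), 0 < φ s)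
    (hφ1 : ∀ s ∈ Set.Ioo (-(D / 2)) (D / 2), DifferentiableAt ℝ φ s)
    (hφ2 : ∀ s ∈ Set.Ioo (-(D / 2)) (D / 2), DifferentiableAt ℝ (deriv φ) s)
    (hφ3 : ∀ s ∈ Set.Ioo (-(D / 2)) (D / 2), DifferentiableAt ℝ (deriv (deriv φ)) s)
    (hode : ∀ s ∈ Set.Ioo (-(D / 2)) (D / 2),
      -(deriv (deriv φ) s) + ((n : ℝ) - 1) * tnk k s * deriv φ s + Vt s * φ s
        = lamb₁ * φ s) :
    ∀ s ∈ Set.Ioo (-(D / 2)) (D / 2),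
      deriv (deriv (fun r => deriv φ r / φ r)) s
        + 2 * deriv (fun r => deriv φ r / φ r) s * (deriv φ s / φ s)
        - tnk k s * (((n : ℝ) + 1) * deriv (fun r => deriv φ r / φ r) s
            + 2 * lamb₁ + 2 * (deriv φ s / φ s) ^ 2 - 2 * Vt s)
        - deriv Vt s
        - ((n : ℝ) - 1) * (k - tnk k s ^ 2) * (deriv φ s / φ s) = 0 := by
  intro s hs
  have hmem : Set.Ioo (-(D / 2)) (D / 2) ∈ nhds s := (isOpen_Ioo).mem_nhds hs
  have hφne : ∀ r ∈ Set.Ioo (-(D / 2)) (D / 2), φ r ≠ 0 := fun r hr => (hφpos r hr).ne'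
  -- first derivative of Ψ on the interval
  have hΨd : ∀ r ∈ Set.Ioo (-(D / 2)) (D / 2),
      HasDerivAt (fun x => deriv φ x / φ x)
        ((deriv (deriv φ) r * φ r - deriv φ r * deriv φ r) / (φ r) ^ 2) r :=
    fun r hr => (hφ2 r hr).hasDerivAt.div (hφ1 r hr).hasDerivAt (hφne r hr)
  have hΨderiv : ∀ r ∈ Set.Ioo (-(D / 2)) (D / 2),
      deriv (fun x => deriv φ x / φ x) r
        = (deriv (deriv φ) r * φ r - deriv φ r * deriv φ r) / (φ r) ^ 2 :=
    fun r hr => (hΨd r hr).deriv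
  -- second derivative of Ψ at s
  have hev : deriv (fun x => deriv φ x / φ x) =ᶠ[nhds s]
      (fun r => (deriv (deriv φ) r * φ r - deriv φ r * deriv φ r) / (φ r) ^ 2) :=
    Filter.eventuallyEq_of_mem hmem hΨderiv
  have hnum : HasDerivAt (fun r => deriv (deriv φ) r * φ r - deriv φ r * deriv φ r)
      (deriv (deriv (deriv φ)) s * φ s + deriv (deriv φ) s * deriv φ s
        - (deriv (deriv φ) s * deriv φ s + deriv φ s * deriv (deriv φ) s)) s :=
    ((hφ3 s hs).hasDerivAt.mul (hφ1 s hs).hasDerivAt).sub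
      ((hφ2 s hs).hasDerivAt.mul (hφ2 s hs).hasDerivAt)
  have hden : HasDerivAt (fun r => (φ r) ^ 2) (2 * φ s * deriv φ s) s := by
    simpa [mul_comm, mul_assoc, pow_one] using (hφ1 s hs).hasDerivAt.fun_pow 2
  have hden_ne : (φ s) ^ 2 ≠ 0 := pow_ne_zero 2 (hφne s hs)
  have hg := hnum.div hden hden_ne
  have hΨ2 : deriv (deriv (fun x => deriv φ x / φ x)) s
      = ((deriv (deriv (deriv φ)) s * φ s + deriv (deriv φ) s * deriv φ s
          - (deriv (deriv φ) s * deriv φ s + deriv φ s * deriv (deriv φ) s)) * (φ s) ^ 2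
          - (deriv (deriv φ) s * φ s - deriv φ s * deriv φ s) * (2 * φ s * deriv φ s))
          / ((φ s) ^ 2) ^ 2 := by
    rw [hev.deriv_eq]
    exact hg.deriv
  -- the ODE: φ'' in terms of lower derivatives, as a function on the interval
  have hodefn : ∀ r ∈ Set.Ioo (-(D / 2)) (D / 2),
      deriv (deriv φ) r
        = ((n : ℝ) - 1) * tnk k r * deriv φ r + Vt r * φ r - lamb₁ * φ r := by
    intro r hr
    have := hode r hr
    linarith
  have hev2 : deriv (deriv φ) =ᶠ[nhds s]
      (fun r => ((n : ℝ) - 1) * tnk k r * deriv φ r + Vt r * φ r - lamb₁ * φ r) :=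
    Filter.eventuallyEq_of_mem hmem hodefn
  -- derivative of the RHS of the ODE
  have ht := tnk_hasDerivAt k hk D hDk s hs
  have hh : HasDerivAt
      (fun r => ((n : ℝ) - 1) * tnk k r * deriv φ r + Vt r * φ r - lamb₁ * φ r)
      ((((n : ℝ) - 1) * (k + tnk k s ^ 2)) * deriv φ s
          + (((n : ℝ) - 1) * tnk k s) * deriv (deriv φ) s
        + (deriv Vt s * φ s + Vt s * deriv φ s) - lamb₁ * deriv φ s) s := by
    have h1 : HasDerivAt (fun r => ((n : ℝ) - 1) * tnk k r)
        (((n : ℝ) - 1) * (k + tnk k s ^ 2)) s := ht.const_mul _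
    have h2 := h1.mul (hφ2 s hs).hasDerivAt
    have h3 := (hVt s hs).hasDerivAt.mul (hφ1 s hs).hasDerivAt
    have h4 := (hφ1 s hs).hasDerivAt.const_mul lamb₁
    exact (h2.add h3).sub h4
  have hc3 : deriv (deriv (deriv φ)) s
      = (((n : ℝ) - 1) * (k + tnk k s ^ 2)) * deriv φ s
          + (((n : ℝ) - 1) * tnk k s) * deriv (deriv φ) s
        + (deriv Vt s * φ s + Vt s * deriv φ s) - lamb₁ * deriv φ s := by
    rw [hev2.deriv_eq]
    exact hh.deriv
  have hc2 : deriv (deriv φ) s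
      = ((n : ℝ) - 1) * tnk k s * deriv φ s + Vt s * φ s - lamb₁ * φ s := hodefn s hs
  rw [hΨ2, hΨderiv s hs, hc3, hc2]
  have hφs : φ s ≠ 0 := hφne s hs
  field_simp
  ring
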